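/- For all n ≥ 4, P(n, 2) ≥ P(n−2, 2) · C(n, 2), where C(n, 2) is the binomial coefficient. -/

import Mathlib

/-- The Chebyshev distance between two permutations of `{1,…,n}`
(represented as permutations of `Fin n`): `max_i |σ(i) − τ(i)|`. -/
def permDist {n : ℕ} (σ τ : Equiv.Perm (Fin n)) : ℕ :=
  Finset.univ.sup fun i => Nat.dist (σ i : ℕ) (τ i : ℕ)

/-- `P n d` is the maximum cardinality of a set of permutations of `{1,…,n}`
whose pairwise Chebyshev distance is at least `d`. -/
noncomputable def P (n d : ℕ) : ℕ :=
  sSup {k | ∃ A : Finset (Equiv.Perm (Fin n)),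
    (∀ σ ∈ A, ∀ τ ∈ A, σ ≠ τ → d ≤ permDist σ τ) ∧ A.card = k}

namespace S17

open Equiv Finset

/-! ### The order embedding of `ℕ` skipping two values `a < b` -/

def emb2 (a b i : ℕ) : ℕ := if i < a then i else if i + 1 < b then i + 1 else i + 2

lemma emb2_lt {m a b i : ℕ} (hb : b < m + 2) (hi : i < m) : emb2 a b i < m + 2 := by
  unfold emb2; split_ifs <;> omega

lemma emb2_ne_a {a b i : ℕ} (hab : a < b) : emb2 a b i ≠ a := by
  unfold emb2; split_ifs <;> omega

lemma emb2_ne_b {a b i : ℕ} (hab : a < b) : emb2 a b i ≠ b := by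
  unfold emb2; split_ifs <;> omega

lemma emb2_mono {a b i j : ℕ} (hij : i < j) : emb2 a b i < emb2 a b j := by
  unfold emb2; split_ifs <;> omega

lemma emb2_inj {a b i j : ℕ} (h : emb2 a b i = emb2 a b j) : i = j := by
  rcases lt_trichotomy i j with hc | hc | hc
  · exact absurd h (Nat.ne_of_lt (emb2_mono hc))
  · exact hc
  · exact absurd h.symm (Nat.ne_of_lt (emb2_mono hc))

variable {m : ℕ}

/-! ### Building blocks of the construction -/

def eF (a b : Fin (m + 2)) (j : Fin m) : Fin (m + 2) :=
  ⟨emb2 (a : ℕ) (b : ℕ) (j : ℕ), emb2_lt b.isLt j.isLt⟩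

def lastF (hm : 0 < m) : Fin m := ⟨m - 1, by omega⟩

def low (j : Fin m) : Fin (m + 2) := ⟨(j : ℕ), by have := j.isLt; omega⟩

def topF : Fin (m + 2) := ⟨m + 1, by omega⟩

def secF : Fin (m + 2) := ⟨m, by omega⟩

/-- the position of the value `m - 1` (third largest value of `Fin (m+2)`). -/
def pstar (hm : 0 < m) (a b : Fin (m + 2)) (σ : Equiv.Perm (Fin m)) : Fin (m + 2) :=
  eF a b (σ.symm (lastF hm))

/-- position of the top value `m+1`. -/
def posT (hm : 0 < m) (a b : Fin (m + 2)) (σ : Equiv.Perm (Fin m)) : Fin (m + 2) :=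
  if (a : ℕ) < (pstar hm a b σ : ℕ) ∧ (pstar hm a b σ : ℕ) < (b : ℕ) then b else a

/-- position of the second value `m`. -/
def posS (hm : 0 < m) (a b : Fin (m + 2)) (σ : Equiv.Perm (Fin m)) : Fin (m + 2) :=
  if (a : ℕ) < (pstar hm a b σ : ℕ) ∧ (pstar hm a b σ : ℕ) < (b : ℕ) then a else b

lemma posT_or (hm : 0 < m) (a b : Fin (m + 2)) (σ : Equiv.Perm (Fin m)) :
    posT hm a b σ = a ∨ posT hm a b σ = b := by
  unfold posT; split_ifs <;> simp

lemma posS_or (hm : 0 < m) (a b : Fin (m + 2)) (σ : Equiv.Perm (Fin m)) :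
    posS hm a b σ = a ∨ posS hm a b σ = b := by
  unfold posS; split_ifs <;> simp

lemma posT_ne_posS (hm : 0 < m) {a b : Fin (m + 2)} (hab : a < b) (σ : Equiv.Perm (Fin m)) :
    posT hm a b σ ≠ posS hm a b σ := by
  unfold posT posS; split_ifs
  · exact (Fin.ne_of_lt hab).symm
  · exact Fin.ne_of_lt hab

lemma pstar_ne_a (hm : 0 < m) {a b : Fin (m + 2)} (hab : a < b) (σ : Equiv.Perm (Fin m)) :
    (pstar hm a b σ : ℕ) ≠ (a : ℕ) :=
  emb2_ne_a (show (a : ℕ) < (b : ℕ) from hab)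

lemma pstar_ne_b (hm : 0 < m) {a b : Fin (m + 2)} (hab : a < b) (σ : Equiv.Perm (Fin m)) :
    (pstar hm a b σ : ℕ) ≠ (b : ℕ) :=
  emb2_ne_b (show (a : ℕ) < (b : ℕ) from hab)

lemma eF_ne_a {a b : Fin (m + 2)} (hab : a < b) (j : Fin m) : eF a b j ≠ a :=
  fun h => emb2_ne_a (show (a : ℕ) < (b : ℕ) from hab) (congrArg Fin.val h)

lemma eF_ne_b {a b : Fin (m + 2)} (hab : a < b) (j : Fin m) : eF a b j ≠ b :=
  fun h => emb2_ne_b (show (a : ℕ) < (b : ℕ) from hab) (congrArg Fin.val h)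

/-! ### The inverse function of the constructed permutation -/

def bFun (hm : 0 < m) (a b : Fin (m + 2)) (σ : Equiv.Perm (Fin m)) :
    Fin (m + 2) → Fin (m + 2) := fun v =>
  if h : (v : ℕ) < m then eF a b (σ.symm ⟨(v : ℕ), h⟩)
  else if (v : ℕ) = m then posS hm a b σ else posT hm a b σ

lemma bFun_inj (hm : 0 < m) {a b : Fin (m + 2)} (hab : a < b) (σ : Equiv.Perm (Fin m)) :
    Function.Injective (bFun hm a b σ) := by
  intro v w h
  by_cases h1 : (v : ℕ) < m <;> by_cases h2 : (w : ℕ) < m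
  · simp only [bFun, dif_pos h1, dif_pos h2] at h
    have h' : σ.symm ⟨(v : ℕ), h1⟩ = σ.symm ⟨(w : ℕ), h2⟩ :=
      Fin.ext (emb2_inj (congrArg Fin.val h))
    have := σ.symm.injective h'
    have h2 := congrArg Fin.val this
    exact Fin.ext h2
  · simp only [bFun, dif_pos h1, dif_neg h2] at h
    exfalso
    split_ifs at h
    · rcases posS_or hm a b σ with hs | hs <;> rw [hs] at h
      · exact eF_ne_a hab _ h
      · exact eF_ne_b hab _ h
    · rcases posT_or hm a b σ with hs | hs <;> rw [hs] at h
      · exact eF_ne_a hab _ h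
      · exact eF_ne_b hab _ h
  · simp only [bFun, dif_neg h1, dif_pos h2] at h
    exfalso
    split_ifs at h
    · rcases posS_or hm a b σ with hs | hs <;> rw [hs] at h
      · exact eF_ne_a hab _ h.symm
      · exact eF_ne_b hab _ h.symm
    · rcases posT_or hm a b σ with hs | hs <;> rw [hs] at h
      · exact eF_ne_a hab _ h.symm
      · exact eF_ne_b hab _ h.symm
  · simp only [bFun, dif_neg h1, dif_neg h2] at h
    split_ifs at h with h3 h4 h4
    · exact Fin.ext (h3.trans h4.symm)
    · exact absurd h (posT_ne_posS hm hab σ).symm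
    · exact absurd h (posT_ne_posS hm hab σ)
    · have hv := v.isLt; have hw := w.isLt
      exact Fin.ext (by omega)

/-- The constructed permutation. -/
noncomputable def FB (hm : 0 < m) (a b : Fin (m + 2)) (hab : a < b) (σ : Equiv.Perm (Fin m)) :
    Equiv.Perm (Fin (m + 2)) :=
  (Equiv.ofBijective _ (Finite.injective_iff_bijective.mp (bFun_inj hm hab σ))).symm

lemma FB_bFun (hm : 0 < m) {a b : Fin (m + 2)} (hab : a < b) (σ : Equiv.Perm (Fin m))
    (v : Fin (m + 2)) : FB hm a b hab σ (bFun hm a b σ v) = v :=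
  Equiv.symm_apply_apply _ v

lemma bFun_low (hm : 0 < m) (a b : Fin (m + 2)) (σ : Equiv.Perm (Fin m)) (j : Fin m) :
    bFun hm a b σ (low (σ j)) = eF a b j := by
  have h1 : ((low (σ j) : Fin (m + 2)) : ℕ) < m := (σ j).isLt
  simp only [bFun, dif_pos h1]
  congr 1
  have : (⟨((low (σ j) : Fin (m + 2)) : ℕ), h1⟩ : Fin m) = σ j := rfl
  rw [this, Equiv.symm_apply_apply]

lemma FB_eF (hm : 0 < m) {a b : Fin (m + 2)} (hab : a < b) (σ : Equiv.Perm (Fin m)) (j : Fin m) :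
    FB hm a b hab σ (eF a b j) = low (σ j) := by
  rw [← bFun_low hm a b σ j]; exact FB_bFun hm hab σ _

lemma bFun_secF (hm : 0 < m) (a b : Fin (m + 2)) (σ : Equiv.Perm (Fin m)) :
    bFun hm a b σ secF = posS hm a b σ := by
  have h1 : ¬ ((secF : Fin (m + 2)) : ℕ) < m := by simp [secF]
  have h2 : ((secF : Fin (m + 2)) : ℕ) = m := rfl
  simp only [bFun, dif_neg h1, if_pos h2]

lemma bFun_topF (hm : 0 < m) (a b : Fin (m + 2)) (σ : Equiv.Perm (Fin m)) :
    bFun hm a b σ topF = posT hm a b σ := by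
  have h1 : ¬ ((topF : Fin (m + 2)) : ℕ) < m := by simp [topF]
  have h2 : ¬ ((topF : Fin (m + 2)) : ℕ) = m := by simp [topF]
  simp only [bFun, dif_neg h1, if_neg h2]

lemma FB_posS (hm : 0 < m) {a b : Fin (m + 2)} (hab : a < b) (σ : Equiv.Perm (Fin m)) :
    FB hm a b hab σ (posS hm a b σ) = secF := by
  rw [← bFun_secF hm a b σ]; exact FB_bFun hm hab σ _

lemma FB_posT (hm : 0 < m) {a b : Fin (m + 2)} (hab : a < b) (σ : Equiv.Perm (Fin m)) :
    FB hm a b hab σ (posT hm a b σ) = topF := by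
  rw [← bFun_topF hm a b σ]; exact FB_bFun hm hab σ _

lemma FB_pstar (hm : 0 < m) {a b : Fin (m + 2)} (hab : a < b) (σ : Equiv.Perm (Fin m)) :
    FB hm a b hab σ (pstar hm a b σ) = low (lastF hm) := by
  have := FB_eF hm hab σ (σ.symm (lastF hm))
  rw [Equiv.apply_symm_apply] at this
  exact this

/-! ### The key combinatorial rule -/

lemma ruleC (hm : 0 < m) {a b : Fin (m + 2)} (hab : a < b) (σ : Equiv.Perm (Fin m)) :
    ((posS hm a b σ : ℕ) < (pstar hm a b σ : ℕ) ↔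
      ¬ (min (posS hm a b σ : ℕ) (pstar hm a b σ : ℕ) < (posT hm a b σ : ℕ) ∧
          (posT hm a b σ : ℕ) < max (posS hm a b σ : ℕ) (pstar hm a b σ : ℕ))) := by
  have hpa := pstar_ne_a hm hab σ
  have hpb := pstar_ne_b hm hab σ
  have habN : (a : ℕ) < (b : ℕ) := hab
  unfold posT posS
  split_ifs with hc
  · omega
  · omega

/-- both orderings in both pairs, used to conclude `a = a' ∧ b = b'`. -/
lemma abeq {a b a' b' p q p' q' : Fin (m + 2)} (hab : a < b) (hab' : a' < b')
    (hp : p = a ∨ p = b) (hq : q = a ∨ q = b) (hpq : p ≠ q)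
    (hp' : p' = a' ∨ p' = b') (hq' : q' = a' ∨ q' = b') (hpq' : p' ≠ q')
    (e1 : p = p') (e2 : q = q') : a = a' ∧ b = b' := by
  have habN : (a : ℕ) < (b : ℕ) := hab
  have habN' : (a' : ℕ) < (b' : ℕ) := hab'
  have f1 : (p : ℕ) = a ∨ (p : ℕ) = b := hp.imp (congrArg Fin.val) (congrArg Fin.val)
  have f2 : (q : ℕ) = a ∨ (q : ℕ) = b := hq.imp (congrArg Fin.val) (congrArg Fin.val)
  have f3 : (p' : ℕ) = a' ∨ (p' : ℕ) = b' := hp'.imp (congrArg Fin.val) (congrArg Fin.val)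
  have f4 : (q' : ℕ) = a' ∨ (q' : ℕ) = b' := hq'.imp (congrArg Fin.val) (congrArg Fin.val)
  have g1 : (p : ℕ) ≠ (q : ℕ) := fun h => hpq (Fin.ext h)
  have g2 : (p' : ℕ) ≠ (q' : ℕ) := fun h => hpq' (Fin.ext h)
  have g3 : (p : ℕ) = (p' : ℕ) := congrArg Fin.val e1
  have g4 : (q : ℕ) = (q' : ℕ) := congrArg Fin.val e2
  rcases f1 with h1 | h1 <;> rcases f2 with h2 | h2 <;> rcases f3 with h3 | h3 <;>
    rcases f4 with h4 | h4 <;> exact ⟨Fin.ext (by omega), Fin.ext (by omega)⟩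

/-! ### The main distance lemma -/

lemma main_dist (hm : 0 < m) {a b a' b' : Fin (m + 2)} (hab : a < b) (hab' : a' < b')
    (σ σ' : Equiv.Perm (Fin m))
    (hAA : σ = σ' ∨ 2 ≤ permDist σ σ')
    (hne : ¬ (a = a' ∧ b = b' ∧ σ = σ')) :
    2 ≤ permDist (FB hm a b hab σ) (FB hm a' b' hab' σ') := by
  by_contra hcon
  push_neg at hcon
  have hbot : (⊥ : ℕ) < 2 := by
    rw [Nat.bot_eq_zero]; norm_num
  have hall : ∀ i : Fin (m + 2),
      Nat.dist ((FB hm a b hab σ) i : ℕ) ((FB hm a' b' hab' σ') i : ℕ) ≤ 1 := by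
    intro i
    unfold permDist at hcon
    have := (Finset.sup_lt_iff hbot).mp hcon i (Finset.mem_univ i)
    omega
  -- the "same pair" case is impossible via the tails
  have tailcase : a = a' → b = b' → False := by
    intro ha hb
    subst ha; subst hb
    have hσ : σ ≠ σ' := fun h => hne ⟨rfl, rfl, h⟩
    have h2 : 2 ≤ permDist σ σ' := hAA.resolve_left hσ
    unfold permDist at h2
    obtain ⟨j, -, hj⟩ := (Finset.le_sup_iff hbot).mp h2
    have e1 : (FB hm a b hab σ) (eF a b j) = low (σ j) := FB_eF hm hab σ j
    have e2 : (FB hm a b hab' σ') (eF a b j) = low (σ' j) := FB_eF hm hab' σ' j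
    have h3 := hall (eF a b j)
    rw [e1, e2] at h3
    simp only [low, Nat.dist] at h3
    simp only [Nat.dist] at hj
    omega
  -- values of the two permutations at the special points
  have tT := FB_posT hm hab σ
  have tS := FB_posS hm hab σ
  have tP := FB_pstar hm hab σ
  have tT' := FB_posT hm hab' σ'
  have tS' := FB_posS hm hab' σ'
  have tP' := FB_pstar hm hab' σ'
  set τ := FB hm a b hab σ with hτ
  set τ' := FB hm a' b' hab' σ' with hτ'
  -- step 1 : look at τ' at position (posT hm a b σ)
  have h1 := hall (posT hm a b σ)
  rw [tT] at h1
  have hv1lt := (τ' (posT hm a b σ)).isLt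
  simp only [Nat.dist, topF] at h1
  have hv1 : (τ' (posT hm a b σ) : ℕ) = m ∨ (τ' (posT hm a b σ) : ℕ) = m + 1 := by omega
  rcases hv1 with hv1 | hv1
  · -- τ' (posT) = secF, hence posT = posS'
    have hPT : posT hm a b σ = posS hm a' b' σ' := by
      apply τ'.injective
      rw [tS']; exact Fin.ext hv1
    -- look at τ at position (posT hm a' b' σ')
    have h2 := hall (posT hm a' b' σ')
    rw [tT'] at h2
    have hv2lt := (τ (posT hm a' b' σ')).isLt
    simp only [Nat.dist, topF] at h2
    have hv2 : (τ (posT hm a' b' σ') : ℕ) = m ∨ (τ (posT hm a' b' σ') : ℕ) = m + 1 := by omega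
    rcases hv2 with hv2 | hv2
    · -- τ (posT') = secF : posT' = posS ; same pair case
      have hPT' : posT hm a' b' σ' = posS hm a b σ := by
        apply τ.injective
        rw [tS]; exact Fin.ext hv2
      obtain ⟨ha, hb⟩ := abeq hab hab' (posT_or hm a b σ) (posS_or hm a b σ)
        (posT_ne_posS hm hab σ) (posS_or hm a' b' σ') (posT_or hm a' b' σ')
        (Ne.symm (posT_ne_posS hm hab' σ')) hPT hPT'.symm
      exact tailcase ha hb
    · -- τ (posT') = topF : posT' = posT = posS', contradiction
      have : posT hm a' b' σ' = posT hm a b σ := by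
        apply τ.injective
        rw [tT]; exact Fin.ext hv2
      exact posT_ne_posS hm hab' σ' (this.trans hPT)
  · -- τ' (posT) = topF, hence posT = posT'
    have hPT : posT hm a b σ = posT hm a' b' σ' := by
      apply τ'.injective
      rw [tT']; exact Fin.ext hv1
    -- step 2 : look at τ' at position (posS hm a b σ)
    have h2 := hall (posS hm a b σ)
    rw [tS] at h2
    have hv2lt := (τ' (posS hm a b σ)).isLt
    simp only [Nat.dist, secF] at h2
    have hv2 : (τ' (posS hm a b σ) : ℕ) = m - 1 ∨ (τ' (posS hm a b σ) : ℕ) = m ∨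
        (τ' (posS hm a b σ) : ℕ) = m + 1 := by omega
    rcases hv2 with hv2 | hv2 | hv2
    · -- τ' (posS) = low lastF : posS = pstar'
      have hSP' : posS hm a b σ = pstar hm a' b' σ' := by
        apply τ'.injective
        rw [tP']; exact Fin.ext (by simpa [low, lastF] using hv2)
      -- step 3 : look at τ at position (posS hm a' b' σ')
      have h3 := hall (posS hm a' b' σ')
      rw [tS'] at h3
      have hv3lt := (τ (posS hm a' b' σ')).isLt
      simp only [Nat.dist, secF] at h3
      have hv3 : (τ (posS hm a' b' σ') : ℕ) = m - 1 ∨ (τ (posS hm a' b' σ') : ℕ) = m ∨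
          (τ (posS hm a' b' σ') : ℕ) = m + 1 := by omega
      rcases hv3 with hv3 | hv3 | hv3
      · -- τ (posS') = low lastF : posS' = pstar.  Case A2 : use the rule C.
        have hSPa : posS hm a' b' σ' = pstar hm a b σ := by
          apply τ.injective
          rw [tP]; exact Fin.ext (by simpa [low, lastF] using hv3)
        have C1 := ruleC hm hab σ
        have C2 := ruleC hm hab' σ'
        have nT : (posT hm a' b' σ' : ℕ) = (posT hm a b σ : ℕ) :=
          congrArg Fin.val hPT.symm
        have nS' : (posS hm a' b' σ' : ℕ) = (pstar hm a b σ : ℕ) :=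
          congrArg Fin.val hSPa
        have nP' : (pstar hm a' b' σ' : ℕ) = (posS hm a b σ : ℕ) :=
          congrArg Fin.val hSP'.symm
        rw [nT, nS', nP'] at C2
        have hSP : (posS hm a b σ : ℕ) ≠ (pstar hm a b σ : ℕ) := by
          have hpa := pstar_ne_a hm hab σ
          have hpb := pstar_ne_b hm hab σ
          rcases posS_or hm a b σ with hs | hs <;>
            (have := congrArg Fin.val hs; omega)
        omega
      · -- τ (posS') = secF : posS' = posS = pstar' : value clash in τ'
        have heq : posS hm a' b' σ' = posS hm a b σ := by
          apply τ.injective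
          rw [tS]; exact Fin.ext hv3
        have hhh : posS hm a' b' σ' = pstar hm a' b' σ' := heq.trans hSP'
        have h4 : τ' (pstar hm a' b' σ') = secF := by rw [← hhh]; exact tS'
        have h5 : low (lastF hm) = (secF : Fin (m + 2)) := tP'.symm.trans h4
        have h6 := congrArg Fin.val h5
        simp only [low, lastF, secF] at h6
        omega
      · -- τ (posS') = topF : posS' = posT = posT' contradiction
        have : posS hm a' b' σ' = posT hm a b σ := by
          apply τ.injective
          rw [tT]; exact Fin.ext hv3
        rw [hPT] at this
        exact posT_ne_posS hm hab' σ' this.symm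
    · -- τ' (posS) = secF : posS = posS' ; same pair case
      have hPS : posS hm a b σ = posS hm a' b' σ' := by
        apply τ'.injective
        rw [tS']; exact Fin.ext hv2
      obtain ⟨ha, hb⟩ := abeq hab hab' (posT_or hm a b σ) (posS_or hm a b σ)
        (posT_ne_posS hm hab σ) (posT_or hm a' b' σ') (posS_or hm a' b' σ')
        (posT_ne_posS hm hab' σ') hPT hPS
      exact tailcase ha hb
    · -- τ' (posS) = topF : posS = posT' = posT contradiction
      have : posS hm a b σ = posT hm a' b' σ' := by
        apply τ'.injective
        rw [tT']; exact Fin.ext hv2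
      rw [← hPT] at this
      exact posT_ne_posS hm hab σ this.symm

/-! ### Counting pairs -/

def PairsF (m : ℕ) : Finset (Fin (m + 2) × Fin (m + 2)) :=
  Finset.univ.filter fun p => p.1 < p.2

lemma card_PairsF (m : ℕ) : (PairsF m).card = Nat.choose (m + 2) 2 := by
  classical
  have hswap : (Finset.univ.filter fun p : Fin (m + 2) × Fin (m + 2) => p.2 < p.1).card
      = (PairsF m).card := by
    apply Finset.card_nbij' (fun p => (p.2, p.1)) (fun p => (p.2, p.1))
    · intro p hp
      simp only [PairsF, Finset.mem_coe, Finset.mem_filter, Finset.mem_univ, true_and] at hp ⊢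
      exact hp
    · intro p hp
      simp only [PairsF, Finset.mem_coe, Finset.mem_filter, Finset.mem_univ, true_and] at hp ⊢
      exact hp
    · intro p _; rfl
    · intro p _; rfl
  have hunion : (PairsF m) ∪ (Finset.univ.filter fun p : Fin (m + 2) × Fin (m + 2) => p.2 < p.1)
      = Finset.univ.offDiag := by
    ext p
    simp only [PairsF, Finset.mem_union, Finset.mem_filter, Finset.mem_univ, true_and,
      Finset.mem_offDiag]
    exact lt_or_lt_iff_ne
  have hdisj : Disjoint (PairsF m)
      (Finset.univ.filter fun p : Fin (m + 2) × Fin (m + 2) => p.2 < p.1) := by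
    rw [Finset.disjoint_left]
    intro p hp hq
    simp only [PairsF, Finset.mem_filter, Finset.mem_univ, true_and] at hp hq
    exact absurd hq (lt_asymm hp)
  have hcardoff : (Finset.univ.offDiag : Finset ((Fin (m + 2)) × (Fin (m + 2)))).card
      = (m + 2) * (m + 2) - (m + 2) := by
    rw [Finset.offDiag_card]
    simp [Finset.card_univ]
  have hsum : 2 * (PairsF m).card = (m + 2) * (m + 2) - (m + 2) := by
    rw [← hcardoff, ← hunion, Finset.card_union_of_disjoint hdisj, hswap]
    ring
  have heven : 2 ∣ (m + 2) * (m + 1) := by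
    rw [mul_comm]
    exact (Nat.even_mul_succ_self (m + 1)).two_dvd
  have hch : 2 * Nat.choose (m + 2) 2 = (m + 2) * (m + 1) := by
    rw [Nat.choose_two_right]
    show 2 * ((m + 2) * (m + 2 - 1) / 2) = (m + 2) * (m + 1)
    have : m + 2 - 1 = m + 1 := by omega
    rw [this, Nat.mul_div_cancel' heven]
  have hsq : (m + 2) * (m + 2) - (m + 2) = (m + 2) * (m + 1) := by
    have : (m + 2) * (m + 2) = (m + 2) * (m + 1) + (m + 2) := by ring
    omega
  have : 2 * (PairsF m).card = 2 * Nat.choose (m + 2) 2 := by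
    rw [hsum, hsq, hch]
  exact Nat.eq_of_mul_eq_mul_left (by norm_num) this

/-! ### Assembling the code -/

noncomputable def GM (hm : 0 < m) (x : (Fin (m + 2) × Fin (m + 2)) × Equiv.Perm (Fin m)) :
    Equiv.Perm (Fin (m + 2)) :=
  if h : x.1.1 < x.1.2 then FB hm x.1.1 x.1.2 h x.2 else 1

lemma permDist_self {k : ℕ} (σ : Equiv.Perm (Fin k)) : permDist σ σ = 0 := by
  have : permDist σ σ ≤ 0 := Finset.sup_le fun i _ => by simp [Nat.dist_self]
  omega

theorem stmt17_aux (m : ℕ) (hm : 0 < m) (A : Finset (Equiv.Perm (Fin m)))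
    (hA : ∀ σ ∈ A, ∀ τ ∈ A, σ ≠ τ → 2 ≤ permDist σ τ) :
    ∃ B : Finset (Equiv.Perm (Fin (m + 2))),
      (∀ σ ∈ B, ∀ τ ∈ B, σ ≠ τ → 2 ≤ permDist σ τ) ∧
      B.card = A.card * Nat.choose (m + 2) 2 := by
  classical
  set B := ((PairsF m) ×ˢ A).image (GM hm) with hB
  have key : ∀ x ∈ (PairsF m) ×ˢ A, ∀ y ∈ (PairsF m) ×ˢ A, x ≠ y →
      2 ≤ permDist (GM hm x) (GM hm y) := by
    rintro ⟨⟨a, b⟩, σ⟩ hx ⟨⟨a', b'⟩, σ'⟩ hy hxy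
    rw [Finset.mem_product] at hx hy
    have hx1 : a < b := by
      have := hx.1; simp only [PairsF, Finset.mem_filter] at this; exact this.2
    have hy1 : a' < b' := by
      have := hy.1; simp only [PairsF, Finset.mem_filter] at this; exact this.2
    have hAA : σ = σ' ∨ 2 ≤ permDist σ σ' := by
      by_cases h : σ = σ'
      · exact Or.inl h
      · exact Or.inr (hA σ hx.2 σ' hy.2 h)
    have hne : ¬ (a = a' ∧ b = b' ∧ σ = σ') := by
      rintro ⟨rfl, rfl, rfl⟩; exact hxy rfl
    have := main_dist hm hx1 hy1 σ σ' hAA hne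
    simpa only [GM, dif_pos hx1, dif_pos hy1] using this
  have hinj : Set.InjOn (GM hm) ((PairsF m) ×ˢ A : Finset _) := by
    intro x hx y hy hG
    by_contra hxy
    have := key x hx y hy hxy
    rw [hG] at this
    rw [permDist_self] at this
    omega
  refine ⟨B, ?_, ?_⟩
  · intro τ hτ τ' hτ' hne
    rw [hB, Finset.mem_image] at hτ hτ'
    obtain ⟨x, hx, rfl⟩ := hτ
    obtain ⟨y, hy, rfl⟩ := hτ'
    exact key x hx y hy (fun h => hne (congrArg _ h))
  · rw [hB, Finset.card_image_of_injOn hinj, Finset.card_product, card_PairsF, mul_comm]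

end S17

/-- For all `n ≥ 4`, `P(n, 2) ≥ P(n−2, 2) · C(n, 2)`. -/
theorem stmt17 (n : ℕ) (hn : 4 ≤ n) :
    P (n - 2) 2 * Nat.choose n 2 ≤ P n 2 := by
  obtain ⟨m, rfl⟩ : ∃ m, n = m + 2 := ⟨n - 2, by omega⟩
  have hm : 0 < m := by omega
  simp only [Nat.add_sub_cancel]
  have hbdd : BddAbove {k | ∃ A : Finset (Equiv.Perm (Fin m)),
      (∀ σ ∈ A, ∀ τ ∈ A, σ ≠ τ → 2 ≤ permDist σ τ) ∧ A.card = k} := by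
    refine ⟨Fintype.card (Equiv.Perm (Fin m)), ?_⟩
    rintro k ⟨A, -, rfl⟩
    exact Finset.card_le_univ A
  have hne : {k | ∃ A : Finset (Equiv.Perm (Fin m)),
      (∀ σ ∈ A, ∀ τ ∈ A, σ ≠ τ → 2 ≤ permDist σ τ) ∧ A.card = k}.Nonempty :=
    ⟨0, ∅, by simp, rfl⟩
  have hmem : P m 2 ∈ {k | ∃ A : Finset (Equiv.Perm (Fin m)),
      (∀ σ ∈ A, ∀ τ ∈ A, σ ≠ τ → 2 ≤ permDist σ τ) ∧ A.card = k} := by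
    unfold P
    exact Nat.sSup_mem hne hbdd
  obtain ⟨A, hA, hAcard⟩ := hmem
  obtain ⟨B, hBcode, hBcard⟩ := S17.stmt17_aux m hm A hA
  have hbdd2 : BddAbove {k | ∃ C : Finset (Equiv.Perm (Fin (m + 2))),
      (∀ σ ∈ C, ∀ τ ∈ C, σ ≠ τ → 2 ≤ permDist σ τ) ∧ C.card = k} := by
    refine ⟨Fintype.card (Equiv.Perm (Fin (m + 2))), ?_⟩
    rintro k ⟨C, -, rfl⟩
    exact Finset.card_le_univ C
  have hle : B.card ≤ P (m + 2) 2 := by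
    unfold P
    exact le_csSup hbdd2 ⟨B, hBcode, rfl⟩
  rw [hBcard, hAcard] at hle
  exact hle
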